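/- Second-price auctions with additive value boosts have price of anarchy at most (c+2)/(c+1) under undominated bids: fix c > 0, and consider n value-maximizing bidders and m single-slot auctions with values v_ij ≥ 0 and RoS targets τ_i > 0. Each bidder i receives an additive boost c · v_ij / τ_i in auction j, so its score is s_ij = b_ij + c · v_ij / τ_i. Suppose bids satisfy b_ij ≥ v_ij / τ_i (undominatedness); the allocation x assigns each auction j fully to bidders with the highest score (x_ij ∈ [0,1], Σ_i x_ij = 1, x_ij > 0 only if s_ij = max_k s_kj); the payment of bidder i in auction j is p_ij = x_ij · max{ 0, (max_{k≠i} s_kj) − c · v_ij / τ_i }; and every bidder's RoS constraint Σ_j x_ij v_ij ≥ τ_i Σ_j p_ij holds. Then for every feasible allocation y (y_ij ∈ [0,1], Σ_i y_ij ≤ 1 for all j), Σ_i Σ_j y_ij v_ij / τ_i ≤ ((c+2)/(c+1)) · Σ_i Σ_j x_ij v_ij / τ_i. -/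

import Mathlib

open Finset

/-- The highest competing score against bidder `i`: the maximum of `f k` over `k ≠ i`
(interpreted as `0` when there are no other bidders). -/
noncomputable def compMax (n : ℕ) (f : Fin n → ℝ) (i : Fin n) : ℝ :=
  ⨆ k ∈ Finset.univ.erase i, f k

lemma le_compMax {n : ℕ} (f : Fin n → ℝ) (i k : Fin n) (hk : k ≠ i) :
    f k ≤ compMax n f i := by
  unfold compMax
  have hk' : k ∈ Finset.univ.erase i := Finset.mem_erase.mpr ⟨hk, Finset.mem_univ k⟩
  calc f k = ⨆ _ : k ∈ Finset.univ.erase i, f k := (ciSup_pos (f := fun _ => f k) hk').symm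
    _ ≤ ⨆ k, ⨆ _ : k ∈ Finset.univ.erase i, f k :=
        le_ciSup (f := fun k => ⨆ _ : k ∈ Finset.univ.erase i, f k)
          (Set.Finite.bddAbove (Set.finite_range _)) k

/-- Second-price auctions with additive value boosts `c · v i j / τ i` have price of
anarchy at most `(c+2)/(c+1)` under undominated bids: bidders are ranked by score
`s i j = b i j + c * v i j / τ i`, the winner pays the nonnegative part of the highest
competing score minus its own boost. -/
theorem spa_with_boosts_poa_le
    (c : ℝ) (hc : 0 < c)
    (n m : ℕ) (v : Fin n → Fin m → ℝ) (τ : Fin n → ℝ)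
    (b x p s : Fin n → Fin m → ℝ)
    (hv : ∀ i j, 0 ≤ v i j) (hτ : ∀ i, 0 < τ i)
    (hb : ∀ i j, v i j / τ i ≤ b i j)
    (hs : ∀ i j, s i j = b i j + c * v i j / τ i)
    (hx01 : ∀ i j, 0 ≤ x i j ∧ x i j ≤ 1)
    (hxfull : ∀ j, ∑ i, x i j = 1)
    (hwin : ∀ i j, 0 < x i j → ∀ k, s k j ≤ s i j)
    (hpay : ∀ i j, p i j =
      x i j * max 0 (compMax n (fun k => s k j) i - c * v i j / τ i))
    (hros : ∀ i, τ i * ∑ j, p i j ≤ ∑ j, x i j * v i j)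
    (y : Fin n → Fin m → ℝ)
    (hy01 : ∀ i j, 0 ≤ y i j ∧ y i j ≤ 1)
    (hyfeas : ∀ j, ∑ i, y i j ≤ 1) :
    ∑ i, ∑ j, y i j * v i j / τ i ≤
      ((c + 2) / (c + 1)) * ∑ i, ∑ j, x i j * v i j / τ i := by
  have h1c : (0:ℝ) < 1 + c := by linarith
  have hvt : ∀ i j, 0 ≤ v i j / τ i := fun i j => div_nonneg (hv i j) (hτ i).le
  have hp0 : ∀ i j, 0 ≤ p i j := by
    intro i j
    rw [hpay i j]
    exact mul_nonneg (hx01 i j).1 (le_max_left _ _)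
  -- key pointwise bound: if i wins part of auction j, every bidder's value density
  -- is bounded by i's value density plus i's per-unit payment over (1+c).
  have key1 : ∀ j i k, 0 < x i j →
      v k j / τ k ≤ v i j / τ i +
        max 0 (compMax n (fun k => s k j) i - c * v i j / τ i) / (1 + c) := by
    intro j i k hxi
    set q := max 0 (compMax n (fun k => s k j) i - c * v i j / τ i) with hqdef
    have hq : 0 ≤ q := le_max_left _ _
    by_cases hk : k = i
    · subst hk
      have : 0 ≤ q / (1 + c) := div_nonneg hq h1c.le
      linarith
    · have h2 : s k j ≤ compMax n (fun k => s k j) i := le_compMax (fun k => s k j) i k hk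
      have h3 : (1 + c) * (v k j / τ k) ≤ s k j := by
        rw [hs, mul_div_assoc]
        have := hb k j
        linarith [hvt k j]
      have h5 : compMax n (fun k => s k j) i - c * v i j / τ i ≤ q := le_max_right _ _
      have hcv : c * v i j / τ i = c * (v i j / τ i) := by rw [mul_div_assoc]
      have hQ : q = (1 + c) * (q / (1 + c)) := by field_simp
      have hmain : (1 + c) * (v k j / τ k) ≤ (1 + c) * (v i j / τ i + q / (1 + c)) := by
        have hw := hvt i j
        nlinarith [h2, h3, h5]
      exact (mul_le_mul_iff_right₀ h1c).mp hmain
  -- per-auction aggregated bound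
  have key2 : ∀ j k, v k j / τ k ≤
      (∑ i, x i j * v i j / τ i) + (∑ i, p i j) / (1 + c) := by
    intro j k
    calc v k j / τ k = (∑ i, x i j) * (v k j / τ k) := by rw [hxfull j, one_mul]
      _ = ∑ i, x i j * (v k j / τ k) := Finset.sum_mul _ _ _
      _ ≤ ∑ i, (x i j * v i j / τ i + p i j / (1 + c)) := by
          apply Finset.sum_le_sum
          intro i _
          rcases eq_or_lt_of_le (hx01 i j).1 with h0 | hxi
          · rw [hpay i j, ← h0]
            simp
          · have := key1 j i k hxi
            have hmul := mul_le_mul_of_nonneg_left this (le_of_lt hxi)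
            rw [hpay i j]
            calc x i j * (v k j / τ k)
                ≤ x i j * (v i j / τ i +
                    max 0 (compMax n (fun k => s k j) i - c * v i j / τ i) / (1 + c)) := hmul
              _ = x i j * v i j / τ i +
                    x i j * max 0 (compMax n (fun k => s k j) i - c * v i j / τ i) / (1 + c) := by
                  ring
      _ = (∑ i, x i j * v i j / τ i) + (∑ i, p i j) / (1 + c) := by
          rw [Finset.sum_add_distrib, ← Finset.sum_div]
  have hA : ∀ j, 0 ≤ ∑ i, x i j * v i j / τ i := by
    intro j
    apply Finset.sum_nonneg
    intro i _
    exact div_nonneg (mul_nonneg (hx01 i j).1 (hv i j)) (hτ i).le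
  have hP : ∀ j, 0 ≤ ∑ i, p i j := fun j =>
    Finset.sum_nonneg fun i _ => hp0 i j
  have perauction : ∀ j, ∑ k, y k j * v k j / τ k ≤
      (∑ i, x i j * v i j / τ i) + (∑ i, p i j) / (1 + c) := by
    intro j
    set B := (∑ i, x i j * v i j / τ i) + (∑ i, p i j) / (1 + c) with hBdef
    have hB : 0 ≤ B := add_nonneg (hA j) (div_nonneg (hP j) h1c.le)
    calc ∑ k, y k j * v k j / τ k ≤ ∑ k, y k j * B := by
          apply Finset.sum_le_sum
          intro k _
          rw [mul_div_assoc]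
          exact mul_le_mul_of_nonneg_left (key2 j k) (hy01 k j).1
      _ = (∑ k, y k j) * B := (Finset.sum_mul _ _ _).symm
      _ ≤ 1 * B := mul_le_mul_of_nonneg_right (hyfeas j) hB
      _ = B := one_mul B
  set LW := ∑ i, ∑ j, x i j * v i j / τ i with hLWdef
  have hLW0 : 0 ≤ LW := Finset.sum_nonneg fun i _ =>
    Finset.sum_nonneg fun j _ => div_nonneg (mul_nonneg (hx01 i j).1 (hv i j)) (hτ i).le
  have hPtot : ∑ j, ∑ i, p i j ≤ LW := by
    rw [Finset.sum_comm]
    apply Finset.sum_le_sum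
    intro i _
    have h := (le_div_iff₀' (hτ i)).mpr (hros i)
    calc ∑ j, p i j ≤ (∑ j, x i j * v i j) / τ i := h
      _ = ∑ j, x i j * v i j / τ i := Finset.sum_div _ _ _
  calc ∑ i, ∑ j, y i j * v i j / τ i
      = ∑ j, ∑ i, y i j * v i j / τ i := Finset.sum_comm
    _ ≤ ∑ j, ((∑ i, x i j * v i j / τ i) + (∑ i, p i j) / (1 + c)) :=
        Finset.sum_le_sum fun j _ => perauction j
    _ = LW + (∑ j, ∑ i, p i j) / (1 + c) := by
        rw [Finset.sum_add_distrib, ← Finset.sum_div, hLWdef, Finset.sum_comm]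
    _ ≤ LW + LW / (1 + c) := by gcongr
    _ = ((c + 2) / (c + 1)) * LW := by
        field_simp
        ring
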